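/- Let P[i..j] be an f-MEM of P with respect to T that contains no complete phrase of PFP(P) and is contained within a single phrase PFP(P)[a] that occurs at least f times in PFP(T). Then PFP(P)[a] is part of an f-MEM of PFP(P) with respect to PFP(T), and P[i..j] is contained in the pseudo-MEM corresponding to the phrase sequence in S_1 arising from that f-MEM of the parse. -/

import Mathlib

/-- The substring of `S` at 0-indexed closed positions `[i..j]`. -/
def strSub {α : Type*} (S : List α) (i j : ℕ) : List α := (S.drop i).take (j + 1 - i)

/-- `S` occurs as a contiguous substring of `X` at 0-indexed position `p`. -/
def occursAt {α : Type*} (S X : List α) (p : ℕ) : Prop :=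
  p + S.length ≤ X.length ∧ (X.drop p).take S.length = S

/-- The number of occurrences of `S` as a contiguous substring of `X`. -/
def occCount {α : Type*} [DecidableEq α] (S X : List α) : ℕ :=
  ((Finset.range (X.length + 1)).filter
    (fun p => p + S.length ≤ X.length ∧ (X.drop p).take S.length = S)).card

/-- `P[i..j]` (0-indexed, closed) is an `f`-MEM of `P` with respect to `T`. -/
def IsMEM {α : Type*} [DecidableEq α] (f : ℕ) (P T : List α) (i j : ℕ) : Prop :=
  i ≤ j ∧ j < P.length ∧ f ≤ occCount (strSub P i j) T ∧
  (i = 0 ∨ occCount (strSub P (i - 1) j) T < f) ∧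
  (j + 1 = P.length ∨ occCount (strSub P i (j + 1)) T < f)

/-- The trigger positions of `S` under window width `w` and trigger predicate `h`:
positions `q` with `w ≤ q ≤ |S|` such that `h` holds of the `w` characters ending at
(1-indexed) position `q`. -/
def pfpTriggers {α : Type*} (w : ℕ) (h : List α → Bool) (S : List α) : List ℕ :=
  (List.range (S.length + 1)).filter (fun q => decide (w ≤ q) && h ((S.drop (q - w)).take w))

/-- 0-indexed starting positions of the phrases of the prefix-free parse of `S`. -/
def pfpStarts {α : Type*} (w : ℕ) (h : List α → Bool) (S : List α) : List ℕ :=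
  0 :: (pfpTriggers w h S).map (fun q => q - w)

/-- Exclusive ending positions of the phrases of the prefix-free parse of `S`. -/
def pfpEnds {α : Type*} (w : ℕ) (h : List α → Bool) (S : List α) : List ℕ :=
  pfpTriggers w h S ++ [S.length]

/-- The prefix-free parse of `S`, as the list of its phrases. -/
def PFP {α : Type*} (w : ℕ) (h : List α → Bool) (S : List α) : List (List α) :=
  ((pfpStarts w h S).zip (pfpEnds w h S)).map (fun se => (S.drop se.1).take (se.2 - se.1))

/-- The starting position in `S` of phrase `i` (0-indexed) of `PFP(S)`. -/
def pfpStart {α : Type*} (w : ℕ) (h : List α → Bool) (S : List α) (i : ℕ) : ℕ :=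
  (pfpStarts w h S).getD i 0

/-- The exclusive ending position in `S` of phrase `j` (0-indexed) of `PFP(S)`. -/
def pfpEnd {α : Type*} (w : ℕ) (h : List α → Bool) (S : List α) (j : ℕ) : ℕ :=
  (pfpEnds w h S).getD j 0

/-- The substring of `S` that becomes the phrase sequence `PFP(S)[i..j]` (0-indexed):
from the first character of phrase `i` to the last character of phrase `j`. -/
def pfpBecomes {α : Type*} (w : ℕ) (h : List α → Bool) (S : List α) (i j : ℕ) : List α :=
  (S.drop (pfpStart w h S i)).take (pfpEnd w h S j - pfpStart w h S i)

/-- The pair `(l, r)` of 0-indexed phrase positions delimits a phrase sequence in `S₁`: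
`PFP(P)[l..r]` is obtained from an `f`-MEM `PFP(P)[i..j]` of `PFP(P)` with respect to
`PFP(T)` by extending one phrase in each direction where possible. -/
def inS1 {α : Type*} [DecidableEq α] (w f : ℕ) (h : List α → Bool) (P T : List α)
    (l r : ℕ) : Prop :=
  ∃ i j, IsMEM f (PFP w h P) (PFP w h T) i j ∧
    l = i - 1 ∧ r = min (j + 1) ((PFP w h P).length - 1)

/-- The pair `(l, r)` of 0-indexed phrase positions delimits a phrase sequence in `S₂`:
`r = l + 1` and neither phrase `PFP(P)[l]` nor phrase `PFP(P)[l+1]` occurs in `PFP(T)`. -/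
def inS2 {α : Type*} [DecidableEq α] (w : ℕ) (h : List α → Bool) (P T : List α)
    (l r : ℕ) : Prop :=
  r = l + 1 ∧ l + 1 < (PFP w h P).length ∧
  (PFP w h P).getD l [] ∉ PFP w h T ∧ (PFP w h P).getD (l + 1) [] ∉ PFP w h T




lemma occCount_le_sub {α : Type*} [DecidableEq α] (B X : List α) (d L : ℕ)
    (hd : d ≤ B.length) : occCount B X ≤ occCount ((B.drop d).take L) X := by
  set sub := (B.drop d).take L with hsub
  have hlen : sub.length = min L (B.length - d) := by simp [hsub]
  unfold occCount
  apply Finset.card_le_card_of_injOn (fun p => p + d)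
  · intro p hp
    simp only [Finset.mem_coe, Finset.mem_filter, Finset.mem_range] at hp ⊢
    obtain ⟨hp1, hp2, hp3⟩ := hp
    have key : (X.drop (p + d)).take sub.length = sub := by
      have h1 : B.drop d = (X.drop (p + d)).take (B.length - d) := by
        conv_lhs => rw [← hp3]
        rw [List.drop_take, List.drop_drop]
      rw [hsub, h1, List.take_take, List.length_take, List.length_drop, List.take_eq_take_iff]
      omega
    refine ⟨by omega, by omega, key⟩
  · intro x _ y _ hxy
    simpa using hxy

lemma strSub_eq_sub {α : Type*} (S : List α) (i' i j j' : ℕ) (h1 : i' ≤ i)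
    (h2 : i ≤ j + 1) (h3 : j ≤ j') :
    strSub S i j = ((strSub S i' j').drop (i - i')).take (j + 1 - i) := by
  unfold strSub
  rw [List.drop_take, List.drop_drop, List.take_take]
  have e1 : i' + (i - i') = i := by omega
  have e2 : (j' + 1 - i' - (i - i')) = j' + 1 - i := by omega
  rw [e1, e2]
  congr 1
  omega

lemma occCount_strSub_le {α : Type*} [DecidableEq α] (S X : List α) (i' i j j' : ℕ)
    (h1 : i' ≤ i) (h2 : i ≤ j + 1) (h3 : j ≤ j') (h4 : i ≤ S.length) :
    occCount (strSub S i' j') X ≤ occCount (strSub S i j) X := by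
  rw [strSub_eq_sub S i' i j j' h1 h2 h3]
  apply occCount_le_sub
  have : (strSub S i' j').length = min (j' + 1 - i') (S.length - i') := by
    simp [strSub]
  omega

lemma getD_mono_of_pairwise (l : List ℕ) (hl : l.Pairwise (· ≤ ·)) (k k' : ℕ)
    (hk : k ≤ k') (hk' : k' < l.length) : l.getD k 0 ≤ l.getD k' 0 := by
  rcases eq_or_lt_of_le hk with rfl | hlt
  · exact le_refl _
  · have hkl : k < l.length := lt_trans hlt hk'
    have := List.pairwise_iff_get.mp hl ⟨k, hkl⟩ ⟨k', hk'⟩ hlt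
    rw [List.getD_eq_getElem l 0 hkl, List.getD_eq_getElem l 0 hk']
    simpa using this



lemma pfpTriggers_pairwise {α : Type*} (w : ℕ) (h : List α → Bool) (S : List α) :
    (pfpTriggers w h S).Pairwise (· < ·) :=
  List.pairwise_lt_range.filter _

lemma pfpTriggers_le {α : Type*} (w : ℕ) (h : List α → Bool) (S : List α) :
    ∀ q ∈ pfpTriggers w h S, q ≤ S.length := by
  intro q hq
  have := List.mem_range.mp (List.mem_of_mem_filter hq)
  omega

lemma pfpStarts_pairwise {α : Type*} (w : ℕ) (h : List α → Bool) (S : List α) :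
    (pfpStarts w h S).Pairwise (· ≤ ·) := by
  unfold pfpStarts
  refine List.Pairwise.cons (by simp) ?_
  exact (pfpTriggers_pairwise w h S).map _ (fun a b hab => by omega)

lemma pfpEnds_pairwise {α : Type*} (w : ℕ) (h : List α → Bool) (S : List α) :
    (pfpEnds w h S).Pairwise (· ≤ ·) := by
  unfold pfpEnds
  rw [List.pairwise_append]
  refine ⟨(pfpTriggers_pairwise w h S).imp (fun hab => le_of_lt hab), by simp, ?_⟩
  intro a ha b hb
  simp only [List.mem_singleton] at hb
  subst hb
  exact pfpTriggers_le w h S a ha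

lemma pfpStarts_length {α : Type*} (w : ℕ) (h : List α → Bool) (S : List α) :
    (pfpStarts w h S).length = (pfpTriggers w h S).length + 1 := by simp [pfpStarts]

lemma pfpEnds_length {α : Type*} (w : ℕ) (h : List α → Bool) (S : List α) :
    (pfpEnds w h S).length = (pfpTriggers w h S).length + 1 := by simp [pfpEnds]

lemma PFP_length {α : Type*} (w : ℕ) (h : List α → Bool) (S : List α) :
    (PFP w h S).length = (pfpTriggers w h S).length + 1 := by
  simp [PFP, pfpStarts_length, pfpEnds_length]



lemma strSub_single {α : Type*} [Inhabited α] (Q : List α) (a : ℕ) (ha : a < Q.length) :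
    strSub Q a a = [Q.getD a default] := by
  unfold strSub
  have e : a + 1 - a = 1 := by omega
  rw [e, List.getD_eq_getElem Q default ha, List.drop_eq_getElem_cons ha]
  rw [show (1 : ℕ) = 0 + 1 from rfl, List.take_succ_cons, List.take_zero]

lemma extend_to_mem {α : Type*} [DecidableEq α] (f : ℕ) (Q X : List α) (a : ℕ)
    (hN : 1 ≤ Q.length) (ha : a < Q.length)
    (hfreq : f ≤ occCount (strSub Q a a) X) :
    ∃ i' j', IsMEM f Q X i' j' ∧ i' ≤ a ∧ a ≤ j' := by
  set N := Q.length with hNdef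
  set Pr : ℕ → Prop := fun t => f ≤ occCount (strSub Q a t) X with hPr
  have hPra : Pr a := hfreq
  have haN : a ≤ N - 1 := by omega
  set j' := Nat.findGreatest Pr (N - 1) with hj'
  have hj'a : a ≤ j' := Nat.le_findGreatest haN hPra
  have hj'le : j' ≤ N - 1 := Nat.findGreatest_le _
  have hj'spec : Pr j' := Nat.findGreatest_spec haN hPra
  have hright : j' + 1 = N ∨ occCount (strSub Q a (j' + 1)) X < f := by
    rcases eq_or_lt_of_le hj'le with heq | hlt
    · left; omega
    · right
      have hng : ¬ Pr (j' + 1) :=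
        Nat.findGreatest_is_greatest (n := N - 1) (by omega) (by omega)
      by_contra hc
      exact hng (by simpa [hPr] using not_lt.mp hc)
  set Pl : ℕ → Prop := fun t => t ≤ a ∧ f ≤ occCount (strSub Q (a - t) j') X with hPl
  have h0 : Pl 0 := by
    constructor
    · exact Nat.zero_le a
    · simpa using hj'spec
  set d := Nat.findGreatest Pl a with hd
  have hdspec : Pl d := Nat.findGreatest_spec (Nat.zero_le a) h0
  set i' := a - d with hi'
  have hi'a : i' ≤ a := Nat.sub_le a d
  have hleftocc : f ≤ occCount (strSub Q i' j') X := hdspec.2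
  have hleftmax : i' = 0 ∨ occCount (strSub Q (i' - 1) j') X < f := by
    by_cases hz : i' = 0
    · left; exact hz
    · right
      have hda : d < a := by omega
      have hng : ¬ Pl (d + 1) :=
        Nat.findGreatest_is_greatest (n := a) (by omega) (by omega)
      by_contra hc
      refine hng ⟨by omega, ?_⟩
      have he : a - (d + 1) = i' - 1 := by omega
      rw [he]
      exact not_lt.mp hc
  have hj'N : j' < N := by omega
  refine ⟨i', j', ⟨le_trans hi'a hj'a, hj'N, hleftocc, hleftmax, ?_⟩, hi'a, hj'a⟩
  rcases hright with heq | hlt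
  · left; exact heq
  · right
    calc occCount (strSub Q i' (j' + 1)) X
        ≤ occCount (strSub Q a (j' + 1)) X :=
          occCount_strSub_le Q X i' a (j' + 1) (j' + 1) hi'a (by omega)
            (le_refl _) (by omega)
      _ < f := hlt


/-- Let `P[i..j]` (0-indexed) be an `f`-MEM of `P` with respect to `T`
that contains no complete phrase of `PFP(P)` and is contained within a single phrase
`PFP(P)[a]` that occurs at least `f` times in `PFP(T)`. Then `PFP(P)[a]` is part of an
`f`-MEM of `PFP(P)` with respect to `PFP(T)`, and `P[i..j]` is contained in the
pseudo-MEM corresponding to the phrase sequence in `S₁` arising from that `f`-MEM of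
the parse. -/
theorem inside_one_frequent_phrase {α : Type*} [DecidableEq α] (w f : ℕ) (hw : 1 ≤ w)
    (hf : 1 ≤ f) (h : List α → Bool) (P T : List α)
    (hN : 2 ≤ (PFP w h P).length)
    (i j a : ℕ) (hmem : IsMEM f P T i j) (ha : a < (PFP w h P).length)
    (hin1 : pfpStart w h P a ≤ i) (hin2 : j < pfpEnd w h P a)
    (hnophrase : ∀ c, c < (PFP w h P).length →
      ¬ (i ≤ pfpStart w h P c ∧ pfpEnd w h P c ≤ j + 1))
    (hfreq : f ≤ occCount [(PFP w h P).getD a []] (PFP w h T)) :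
    ∃ i' j', IsMEM f (PFP w h P) (PFP w h T) i' j' ∧ i' ≤ a ∧ a ≤ j' ∧
      pfpStart w h P (i' - 1) ≤ i ∧
      j + 1 ≤ pfpEnd w h P (min (j' + 1) ((PFP w h P).length - 1)) := by
  have hNlen : (PFP w h P).length = (pfpTriggers w h P).length + 1 := PFP_length w h P
  have hfreq' : f ≤ occCount (strSub (PFP w h P) a a) (PFP w h T) := by
    rw [strSub_single (PFP w h P) a ha]
    exact hfreq
  obtain ⟨i', j', hmem', hi'a, hj'a⟩ :=
    extend_to_mem f (PFP w h P) (PFP w h T) a (by omega) ha hfreq'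
  have hj'N : j' < (PFP w h P).length := hmem'.2.1
  refine ⟨i', j', hmem', hi'a, hj'a, ?_, ?_⟩
  · refine le_trans ?_ hin1
    exact getD_mono_of_pairwise _ (pfpStarts_pairwise w h P) _ _ (by omega)
      (by rw [pfpStarts_length]; omega)
  · refine le_trans hin2 ?_
    exact getD_mono_of_pairwise _ (pfpEnds_pairwise w h P) _ _ (by omega)
      (by rw [pfpEnds_length]; omega)
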